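/- arXiv:1312.4463 — 5 statements merged into one kernel-verified Lean document; each statement's English description precedes it below -/
import Mathlib

section
/- For every real x with −1 ≤ x ≤ 0 and complex ν with 1 ≤ Re(ν) ≤ 2, one has |(1+x)^ν − 1 − νx| ≤ (1/2 + (1/Re(ν) − 1/2)·(−x))·|ν(ν−1)|·x². -/
open Set Real MeasureTheory intervalIntegral

lemma rpow_convex_combo {p a b u : ℝ} (hp : p ≤ 0) (ha : 0 ≤ a) (hb : 0 ≤ b)
    (hab : a + b = 1) (hu : 0 < u) : (a + b * u) ^ p ≤ a + b * u ^ p := by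
  have habu : 0 < a + b * u := by
    rcases eq_or_lt_of_le ha with h | h
    · have hb1 : b = 1 := by linarith
      simpa [← h, hb1] using hu
    · nlinarith [mul_nonneg hb hu.le]
  have h1 : a * Real.log 1 + b * Real.log u ≤ Real.log (a • (1:ℝ) + b • u) := by
    have := (strictConcaveOn_log_Ioi.concaveOn).2 (mem_Ioi.2 one_pos) (mem_Ioi.2 hu) ha hb hab
    simpa [smul_eq_mul] using this
  rw [smul_eq_mul, smul_eq_mul, mul_one, Real.log_one, mul_zero, zero_add] at h1
  have h2 : (a + b * u) ^ p ≤ Real.exp (b * (p * Real.log u)) := by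
    rw [Real.rpow_def_of_pos habu]
    apply Real.exp_le_exp.2
    calc Real.log (a + b * u) * p = p * Real.log (a + b * u) := by ring
    _ ≤ p * (b * Real.log u) := mul_le_mul_of_nonpos_left h1 hp
    _ = b * (p * Real.log u) := by ring
  have h3 : Real.exp (a • (0:ℝ) + b • (p * Real.log u)) ≤
      a • Real.exp 0 + b • Real.exp (p * Real.log u) :=
    convexOn_exp.2 (mem_univ _) (mem_univ _) ha hb hab
  rw [smul_eq_mul, smul_eq_mul, smul_eq_mul, smul_eq_mul, mul_zero, zero_add, Real.exp_zero,
    mul_one] at h3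
  refine h2.trans (h3.trans ?_)
  rw [Real.rpow_def_of_pos hu]
  rw [mul_comm (Real.log u) p]



set_option maxHeartbeats 1000000 in
/-- Optimized Littlewood lemma: for `−1 ≤ x ≤ 0` and complex `ν` with `1 ≤ Re ν ≤ 2`,
`|(1+x)^ν − 1 − νx| ≤ (1/2 + (1/Re ν − 1/2)(−x))·|ν(ν−1)|·x²`. -/
theorem littlewood_optimized (x : ℝ) (hx1 : -1 ≤ x) (hx0 : x ≤ 0) (ν : ℂ)
    (hν1 : 1 ≤ ν.re) (hν2 : ν.re ≤ 2) :
    ‖(1 + (x : ℂ)) ^ ν - 1 - ν * (x : ℂ)‖ ≤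
      (1 / 2 + (1 / ν.re - 1 / 2) * (-x)) * ‖ν * (ν - 1)‖ * x ^ 2 := by
  rcases eq_or_lt_of_le hx1 with hx | hx1'
  · subst hx
    have hσ : (0:ℝ) < ν.re := by linarith
    have hν0 : ν ≠ 0 := by
      intro h
      rw [h] at hν1
      simp at hν1
      linarith
    have hb : (1 + ((-1:ℝ):ℂ)) = 0 := by push_cast; ring
    rw [hb, Complex.zero_cpow hν0]
    have h1 : (0 - 1 - ν * ((-1:ℝ):ℂ)) = ν - 1 := by push_cast; ring
    rw [h1, norm_mul]
    have h2 := Complex.re_le_norm ν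
    have h3 := norm_nonneg (ν - 1)
    have h4 := norm_nonneg ν
    have h5 : 1 / 2 + (1 / ν.re - 1 / 2) * -(-1:ℝ) = 1 / ν.re := by ring
    rw [h5]
    have h6 : ‖ν - 1‖ * ν.re ≤ ‖ν‖ * ‖ν - 1‖ := by
      nlinarith
    rw [show ((-1:ℝ)) ^ 2 = 1 by norm_num, mul_one, one_div, ← div_eq_inv_mul,
      le_div_iff₀ hσ]
    nlinarith
  · have hσ : (0:ℝ) < ν.re := by linarith
    have hpos : ∀ t : ℝ, t ∈ Icc (0:ℝ) 1 → 0 < 1 + t * x := by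
      intro t ht
      nlinarith [ht.1, ht.2]
    set f : ℝ → ℂ := fun t => (1 + (x:ℂ)) ^ ν -
        (((1:ℂ) + t * x) ^ ν + ((1:ℂ) - t) * (ν * x) * ((1:ℂ) + t * x) ^ (ν - 1)) with hf
    set f' : ℝ → ℂ := fun t =>
        -(((1:ℂ) - t) * (ν * (ν - 1) * (x:ℂ) ^ 2 * ((1:ℂ) + t * x) ^ (ν - 2))) with hf'
    have hderiv : ∀ t ∈ uIcc (0:ℝ) 1, HasDerivAt f (f' t) t := by
      intro t ht
      rw [uIcc_of_le zero_le_one] at ht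
      have hpt : 0 < 1 + t * x := hpos t ht
      have hslit : ((1:ℂ) + (t:ℂ) * x) ∈ Complex.slitPlane := by
        apply Complex.mem_slitPlane_iff.2
        left
        simpa using hpt
      have hbase : HasDerivAt (fun s : ℝ => (1:ℂ) + (s:ℂ) * x) (x:ℂ) t := by
        simpa using (((hasDerivAt_id ((t:ℝ):ℂ)).mul_const (x:ℂ)).const_add 1).comp_ofReal
      have hbaseC : HasDerivAt (fun z : ℂ => (1:ℂ) + z * x) (x:ℂ) ((t:ℝ):ℂ) := by
        simpa using ((hasDerivAt_id ((t:ℝ):ℂ)).mul_const (x:ℂ)).const_add 1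
      have h1 : HasDerivAt (fun s : ℝ => ((1:ℂ) + s * x) ^ ν)
          (ν * ((1:ℂ) + t * x) ^ (ν - 1) * x) t := by
        have := (hbaseC.cpow_const (c := ν) hslit).comp_ofReal
        simpa using this
      have h2 : HasDerivAt (fun s : ℝ => ((1:ℂ) + s * x) ^ (ν - 1))
          ((ν - 1) * ((1:ℂ) + t * x) ^ (ν - 2) * x) t := by
        have := (hbaseC.cpow_const (c := ν - 1) hslit).comp_ofReal
        rw [show ν - 1 - 1 = ν - 2 by ring] at this
        simpa using this
      have h3 : HasDerivAt (fun s : ℝ => ((1:ℂ) - s) * (ν * x)) (-1 * (ν * (x:ℂ))) t := by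
        apply HasDerivAt.mul_const
        simpa using ((hasDerivAt_id ((t:ℝ):ℂ)).const_sub 1).comp_ofReal
      have h4 := (h1.add (h3.mul h2)).const_sub ((1 + (x:ℂ)) ^ ν)
      refine h4.congr_deriv ?_
      simp only [hf']
      ring
    have hcont : ContinuousOn f' (uIcc (0:ℝ) 1) := by
      rw [uIcc_of_le zero_le_one]
      have hb : ContinuousOn (fun t : ℝ => (1:ℂ) + (t:ℂ) * x) (Icc 0 1) :=
        (continuous_const.add (Complex.continuous_ofReal.mul continuous_const)).continuousOn
      have hc : ContinuousOn (fun t : ℝ => ((1:ℂ) + (t:ℂ) * x) ^ (ν - 2)) (Icc 0 1) := by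
        apply hb.cpow_const
        intro t ht
        apply Complex.mem_slitPlane_iff.2
        left
        simpa using hpos t ht
      apply ContinuousOn.neg
      exact ((continuous_const.sub Complex.continuous_ofReal).continuousOn.mul
        (continuous_const.continuousOn.mul hc))
    have hint : IntervalIntegrable f' volume 0 1 := hcont.intervalIntegrable
    have hFTC := intervalIntegral.integral_eq_sub_of_hasDerivAt hderiv hint
    have hf1 : f 1 = 0 := by
      simp [hf]
    have hf0 : f 0 = (1 + (x:ℂ)) ^ ν - 1 - ν * x := by
      simp [hf]
      ring
    have hrep : (1 + (x:ℂ)) ^ ν - 1 - ν * x =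
        ∫ t in (0:ℝ)..1, ((1:ℂ) - t) * (ν * (ν - 1) * (x:ℂ) ^ 2 * ((1:ℂ) + t * x) ^ (ν - 2)) := by
      rw [hf1, hf0] at hFTC
      have h5 : (∫ t in (0:ℝ)..1, f' t) =
          -∫ t in (0:ℝ)..1, ((1:ℂ) - t) * (ν * (ν - 1) * (x:ℂ) ^ 2 * ((1:ℂ) + t * x) ^ (ν - 2)) := by
        rw [← intervalIntegral.integral_neg]
      rw [h5, zero_sub] at hFTC
      exact (neg_inj.1 hFTC).symm
    rw [hrep]
    have hK : (0:ℝ) ≤ ‖ν * (ν - 1)‖ := norm_nonneg _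
    set K : ℝ := ‖ν * (ν - 1)‖ with hKdef
    set G : ℝ → ℝ := fun t => K * x ^ 2 * ((1 + x) * (1 - t) + (-x) * (1 - t) ^ (ν.re - 1))
      with hG
    have i1 : IntervalIntegrable (fun t : ℝ => (1:ℝ) - t) volume 0 1 :=
      (continuous_const.sub continuous_id).intervalIntegrable 0 1
    have i2 : IntervalIntegrable (fun t : ℝ => (1 - t) ^ (ν.re - 1)) volume 0 1 := by
      have := (intervalIntegrable_rpow (r := ν.re - 1) (a := 0) (b := 1)
        (Or.inl (by linarith))).comp_sub_left 1
      simpa using this.symm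
    have hGint : IntervalIntegrable G volume 0 1 := by
      apply IntervalIntegrable.const_mul
      exact (i1.const_mul _).add (i2.const_mul _)
    have hbound : ∀ᵐ (t : ℝ) ∂volume.restrict (Set.uIoc (0:ℝ) 1),
        ‖((1:ℂ) - t) * (ν * (ν - 1) * (x:ℂ) ^ 2 * ((1:ℂ) + t * x) ^ (ν - 2))‖ ≤ G t := by
      rw [uIoc_of_le zero_le_one]
      filter_upwards [ae_restrict_mem measurableSet_Ioc] with t ht
      have ht1 : t ≤ 1 := ht.2
      have ht0 : 0 < t := ht.1
      have hpt : 0 < 1 + t * x := hpos t ⟨ht0.le, ht1⟩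
      have hnorm : ‖((1:ℂ) - t) * (ν * (ν - 1) * (x:ℂ) ^ 2 * ((1:ℂ) + t * x) ^ (ν - 2))‖ =
          (1 - t) * (K * (x ^ 2 * (1 + t * x) ^ (ν.re - 2))) := by
        have hb : ((1:ℂ) + (t:ℂ) * x) = (((1 + t * x : ℝ)):ℂ) := by push_cast; ring
        have hcpow : ‖((1:ℂ) + t * x) ^ (ν - 2)‖ = (1 + t * x) ^ (ν.re - 2) := by
          rw [hb, Complex.norm_cpow_eq_rpow_re_of_pos hpt]
          norm_num
        have h1t : ((1:ℂ) - (t:ℂ)) = (((1 - t : ℝ)):ℂ) := by push_cast; ring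
        rw [norm_mul, norm_mul, norm_mul, hcpow, h1t, Complex.norm_real, Real.norm_eq_abs,
          abs_of_nonneg (by linarith : (0:ℝ) ≤ 1 - t)]
        rw [show ‖(x:ℂ) ^ 2‖ = x ^ 2 by
          rw [← Complex.ofReal_pow, Complex.norm_real, Real.norm_eq_abs]; exact abs_of_nonneg (sq_nonneg x)]
        rw [hKdef]
        ring
      rw [hnorm]
      simp only [hG]
      rcases eq_or_lt_of_le ht1 with h | h
      · subst h
        simp only [sub_self, zero_mul, mul_zero, zero_add]
        exact mul_nonneg (mul_nonneg hK (sq_nonneg x))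
          (mul_nonneg (neg_nonneg.2 hx0) (Real.rpow_nonneg le_rfl _))
      · have key := rpow_convex_combo (p := ν.re - 2) (a := 1 + x) (b := -x) (u := 1 - t)
          (by linarith) (by linarith) (by linarith) (by ring) (by linarith)
        rw [show (1 + x) + (-x) * (1 - t) = 1 + t * x by ring] at key
        have hsplit : (1 - t) ^ (ν.re - 1) = (1 - t) * (1 - t) ^ (ν.re - 2) := by
          rw [show ν.re - 1 = 1 + (ν.re - 2) by ring, Real.rpow_add (by linarith), Real.rpow_one]
        rw [hsplit]
        have hw : (0:ℝ) ≤ (1 - t) * (K * x ^ 2) :=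
          mul_nonneg (by linarith) (mul_nonneg hK (sq_nonneg x))
        nlinarith [mul_le_mul_of_nonneg_left key hw]
    have hmain := intervalIntegral.norm_integral_le_of_norm_le zero_le_one
      ((ae_restrict_iff' measurableSet_Ioc).1 (by rwa [uIoc_of_le zero_le_one] at hbound)) hGint
    have hI1 : (∫ t in (0:ℝ)..1, (1 - t)) = 1 / 2 := by
      rw [integral_sub intervalIntegrable_const intervalIntegral.intervalIntegrable_id,
        integral_id]
      simp
      norm_num
    have hI2 : (∫ t in (0:ℝ)..1, (1 - t) ^ (ν.re - 1)) = 1 / ν.re := by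
      have hcs := integral_comp_sub_left (a := (0:ℝ)) (b := 1) (fun s : ℝ => s ^ (ν.re - 1)) 1
      simp only [sub_zero, sub_self] at hcs
      rw [hcs, integral_rpow (Or.inl (by linarith : (-1:ℝ) < ν.re - 1))]
      rw [show ν.re - 1 + 1 = ν.re by ring, Real.one_rpow, Real.zero_rpow (ne_of_gt hσ)]
      norm_num
    have hGval : (∫ t in (0:ℝ)..1, G t) = K * x ^ 2 * ((1 + x) * (1 / 2) + (-x) * (1 / ν.re)) := by
      rw [hG]
      rw [intervalIntegral.integral_const_mul, integral_add (i1.const_mul _) (i2.const_mul _),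
        intervalIntegral.integral_const_mul, intervalIntegral.integral_const_mul, hI1, hI2]
    have hGnonneg : (0:ℝ) ≤ K * x ^ 2 * ((1 + x) * (1 / 2) + (-x) * (1 / ν.re)) := by
      apply mul_nonneg (mul_nonneg hK (sq_nonneg x))
      have : (0:ℝ) ≤ -x * (1 / ν.re) := mul_nonneg (by linarith) (by positivity)
      nlinarith
    rw [hGval] at hmain
    refine hmain.trans (le_of_eq ?_)
    field_simp
    ring
end

section
/- Define f₁(x) = ∑_{r=1}^∞ x^{1−2r}/(2r(2r−1)) for x > 1. Then f₁(x) = (1/2)[x·log(1 − x^{−2}) + log((1 + x^{−1})/(1 − x^{−1}))]. -/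
/-- For `x > 1`,
`f₁(x) = ∑_{r=1}^∞ x^{1−2r}/(2r(2r−1))
       = (1/2)[x·log(1 − x⁻²) + log((1 + x⁻¹)/(1 − x⁻¹))]`. -/
theorem f1_closed_form (x : ℝ) (hx : 1 < x) :
    ∑' r : ℕ, x ^ (1 - 2 * ((r : ℤ) + 1)) / ((2 * ((r : ℝ) + 1)) * (2 * ((r : ℝ) + 1) - 1)) =
      1 / 2 * (x * Real.log (1 - (x⁻¹) ^ 2) + Real.log ((1 + x⁻¹) / (1 - x⁻¹))) := by
  have hx0 : (0:ℝ) < x := lt_trans one_pos hx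
  set y := x⁻¹ with hy
  have hy0 : 0 < y := inv_pos.2 hx0
  have hy1 : y < 1 := inv_lt_one_of_one_lt₀ hx
  have hxy : x * y = 1 := mul_inv_cancel₀ (ne_of_gt hx0)
  have hay : |y| < 1 := abs_lt.2 ⟨by linarith, hy1⟩
  have hany : |(-y)| < 1 := by rwa [abs_neg]
  have hf := Real.hasSum_pow_div_log_of_abs_lt_one hay
  have hg := Real.hasSum_pow_div_log_of_abs_lt_one hany
  -- odd part
  have hA : HasSum (fun r : ℕ => 2 * y ^ (2*r+1) / (2*(r:ℝ)+1))
      (Real.log (1+y) - Real.log (1-y)) := by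
    have hsub : HasSum (fun n : ℕ => y^(n+1)/((n:ℝ)+1) - (-y)^(n+1)/((n:ℝ)+1))
        (Real.log (1+y) - Real.log (1-y)) := by
      have h := (hf.sub hg).neg
      simpa [sub_neg_eq_add, neg_sub, neg_add_eq_sub, sub_sub_cancel] using h.neg
    have hinj : Function.Injective (fun r : ℕ => 2*r) := fun a b h => by
      simp only at h; omega
    have h0 : ∀ m ∉ Set.range (fun r : ℕ => 2*r),
        (fun n : ℕ => y^(n+1)/((n:ℝ)+1) - (-y)^(n+1)/((n:ℝ)+1)) m = 0 := by
      intro m hm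
      obtain ⟨k, hk⟩ : Odd m := by
        rcases Nat.even_or_odd m with he | ho
        · obtain ⟨k, hk⟩ := he
          exact absurd ⟨k, by simp only; omega⟩ hm
        · exact ho
      subst hk
      have hev : (-y)^(2*k+1+1) = y^(2*k+1+1) := Even.neg_pow ⟨k+1, by ring⟩ y
      simp [hev]
    have h2 := (hinj.hasSum_iff h0).2 hsub
    have heq : (fun n : ℕ => y^(n+1)/((n:ℝ)+1) - (-y)^(n+1)/((n:ℝ)+1)) ∘ (fun r : ℕ => 2*r)
        = fun r : ℕ => 2 * y ^ (2*r+1) / (2*(r:ℝ)+1) := by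
      funext r
      have hodd : (-y)^(2*r+1) = -(y^(2*r+1)) := Odd.neg_pow ⟨r, by ring⟩ y
      simp only [Function.comp]
      push_cast
      rw [hodd]
      ring
    exact heq ▸ h2
  -- even part
  have hB : HasSum (fun r : ℕ => 2 * y ^ (2*r+2) / (2*(r:ℝ)+2))
      (-Real.log (1 - y^2)) := by
    have hadd : HasSum (fun n : ℕ => y^(n+1)/((n:ℝ)+1) + (-y)^(n+1)/((n:ℝ)+1))
        (-Real.log (1 - y^2)) := by
      have h := hf.add hg
      simp only [sub_neg_eq_add] at h
      have hl : -Real.log (1-y) + -Real.log (1+y) = -Real.log (1 - y^2) := by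
        rw [← neg_add, ← Real.log_mul (by nlinarith) (by nlinarith)]
        ring_nf
      rwa [hl] at h
    have hinj : Function.Injective (fun r : ℕ => 2*r+1) := fun a b h => by
      simp only at h; omega
    have h0 : ∀ m ∉ Set.range (fun r : ℕ => 2*r+1),
        (fun n : ℕ => y^(n+1)/((n:ℝ)+1) + (-y)^(n+1)/((n:ℝ)+1)) m = 0 := by
      intro m hm
      obtain ⟨k, hk⟩ : Even m := by
        rcases Nat.even_or_odd m with he | ho
        · exact he
        · obtain ⟨k, hk⟩ := ho
          exact absurd ⟨k, by simp only; omega⟩ hm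
      subst hk
      have hodd : (-y)^(k+k+1) = -(y^(k+k+1)) := Odd.neg_pow ⟨k, by ring⟩ y
      simp only []
      rw [hodd]; ring
    have h2 := (hinj.hasSum_iff h0).2 hadd
    have heq : (fun n : ℕ => y^(n+1)/((n:ℝ)+1) + (-y)^(n+1)/((n:ℝ)+1)) ∘ (fun r : ℕ => 2*r+1)
        = fun r : ℕ => 2 * y ^ (2*r+2) / (2*(r:ℝ)+2) := by
      funext r
      have hev : (-y)^(2*r+1+1) = y^(2*r+1+1) := Even.neg_pow ⟨r+1, by ring⟩ y
      simp only [Function.comp]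
      push_cast
      rw [hev]
      ring_nf
    exact heq ▸ h2
  -- combine
  have hmain : HasSum
      (fun r : ℕ => x ^ (1 - 2 * ((r : ℤ) + 1)) / ((2 * ((r : ℝ) + 1)) * (2 * ((r : ℝ) + 1) - 1)))
      (1 / 2 * (x * Real.log (1 - y ^ 2) + Real.log ((1 + y) / (1 - y)))) := by
    have h := (hA.mul_left (1/2)).sub (hB.mul_left (x/2))
    have heq : (fun r : ℕ => 1/2 * (2 * y ^ (2*r+1) / (2*(r:ℝ)+1))
          - x/2 * (2 * y ^ (2*r+2) / (2*(r:ℝ)+2)))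
        = fun r : ℕ => x ^ (1 - 2 * ((r : ℤ) + 1)) / ((2 * ((r : ℝ) + 1)) * (2 * ((r : ℝ) + 1) - 1)) := by
      funext r
      have hz : x ^ (1 - 2 * ((r : ℤ) + 1)) = y ^ (2*r+1) := by
        have : (1 - 2 * ((r : ℤ) + 1)) = -((2*r+1 : ℕ) : ℤ) := by push_cast; ring
        rw [this, zpow_neg, zpow_natCast, hy, inv_pow]
      rw [hz]
      have hr0 : (0:ℝ) ≤ r := Nat.cast_nonneg r
      have h1 : (2*(r:ℝ)+1) ≠ 0 := by positivity
      have h2 : (2*(r:ℝ)+2) ≠ 0 := by positivity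
      have h3 : (2*((r:ℝ)+1)) ≠ 0 := by positivity
      have h4 : (2*((r:ℝ)+1)-1) ≠ 0 := by intro h; nlinarith
      have hxyy : x * y ^ (2*r+2) = y ^ (2*r+1) := by
        calc x * y ^ (2*r+2) = y ^ (2*r+1) * (x*y) := by ring
        _ = y ^ (2*r+1) := by rw [hxy, mul_one]
      have e1 : 1/2*(2*y^(2*r+1)/(2*(r:ℝ)+1)) = y^(2*r+1)/(2*(r:ℝ)+1) := by
        field_simp
      have e2 : x/2*(2*y^(2*r+2)/(2*(r:ℝ)+2)) = y^(2*r+1)/(2*(r:ℝ)+2) := by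
        rw [← hxyy]
        ring
      rw [e1, e2]
      field_simp
      ring
    have hval : 1/2 * (Real.log (1+y) - Real.log (1-y)) - x/2 * (-Real.log (1 - y^2))
        = 1 / 2 * (x * Real.log (1 - y ^ 2) + Real.log ((1 + y) / (1 - y))) := by
      rw [Real.log_div (by nlinarith) (by nlinarith)]
      ring
    rw [heq, hval] at h
    exact h
  rw [hmain.tsum_eq]
end

section
/- Define f₂(x) = ∑_{r=2}^∞ x^{2−2r}/((2r−1)(2r−2)) for x > 1. Then f₂(x) = 1 − (1/2)[log(1 − x^{−2}) + x·log((1 + x^{−1})/(1 − x^{−1}))]. -/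
/-- For `x > 1`,
`f₂(x) = ∑_{r=2}^∞ x^{2−2r}/((2r−1)(2r−2))
       = 1 − (1/2)[log(1 − x⁻²) + x·log((1 + x⁻¹)/(1 − x⁻¹))]`. -/
theorem f2_closed_form (x : ℝ) (hx : 1 < x) :
    ∑' r : ℕ, x ^ (2 - 2 * ((r : ℤ) + 2)) /
        ((2 * ((r : ℝ) + 2) - 1) * (2 * ((r : ℝ) + 2) - 2)) =
      1 - 1 / 2 * (Real.log (1 - (x⁻¹) ^ 2) + x * Real.log ((1 + x⁻¹) / (1 - x⁻¹))) := by
  have hx0 : 0 < x := lt_trans one_pos hx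
  set y : ℝ := x⁻¹ with hy_def
  have hy0 : 0 < y := inv_pos.mpr hx0
  have hy1 : y < 1 := inv_lt_one_of_one_lt₀ hx
  have hxy : x * y = 1 := mul_inv_cancel₀ (ne_of_gt hx0)
  have hyabs : |y| < 1 := by rw [abs_of_pos hy0]; exact hy1
  have hOdd := (Real.hasSum_log_sub_log_of_abs_lt_one hyabs).mul_left (1 / 2)
  have hOdd' : HasSum (fun k : ℕ => y ^ (2 * k + 1) / (2 * (k:ℝ) + 1))
      (1 / 2 * (Real.log (1 + y) - Real.log (1 - y))) := by
    convert hOdd using 2 with k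
    rfl
    have h : (0:ℝ) < 2 * (k:ℝ) + 1 := by positivity
    field_simp
  set L : ℝ := 1 / 2 * (Real.log (1 + y) - Real.log (1 - y)) with hL
  have hShift : HasSum (fun n : ℕ => y ^ (2 * n + 3) / (2 * (n:ℝ) + 3)) (L - y) := by
    have h := (hasSum_nat_add_iff' (f := fun k : ℕ => y ^ (2 * k + 1) / (2 * (k:ℝ) + 1)) 1).2 hOdd'
    simp only [Finset.range_one, Finset.sum_singleton] at h
    norm_num at h
    convert h using 2 with n
    rfl
    ring_nf
  have hB : HasSum (fun n : ℕ => y ^ (2 * n + 2) / (2 * (n:ℝ) + 3)) (x * (L - y)) := by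
    have h := hShift.mul_left x
    convert h using 2 with n
    rfl
    have h1 : y ^ (2 * n + 3) = y * y ^ (2 * n + 2) := by ring
    rw [h1, mul_div_assoc, ← mul_assoc, hxy, one_mul]
  have hy2 : |y ^ 2| < 1 := by
    rw [abs_of_nonneg (sq_nonneg y)]; nlinarith
  have hA : HasSum (fun n : ℕ => y ^ (2 * n + 2) / (2 * (n:ℝ) + 2))
      (1 / 2 * -Real.log (1 - y ^ 2)) := by
    have h := (Real.hasSum_pow_div_log_of_abs_lt_one hy2).mul_left (1 / 2)
    convert h using 2 with n
    rfl
    rw [← pow_mul, show 2*n+2 = 2*(n+1) from by ring]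
    have h2 : (0:ℝ) < (n:ℝ) + 1 := by positivity
    field_simp
  have hSum : HasSum
      (fun n : ℕ => y ^ (2 * n + 2) / (2 * (n:ℝ) + 2) - y ^ (2 * n + 2) / (2 * (n:ℝ) + 3))
      (1 / 2 * -Real.log (1 - y ^ 2) - x * (L - y)) := hA.sub hB
  have hEq : (fun r : ℕ => x ^ (2 - 2 * ((r : ℤ) + 2)) /
        ((2 * ((r : ℝ) + 2) - 1) * (2 * ((r : ℝ) + 2) - 2))) =
      fun n : ℕ => y ^ (2 * n + 2) / (2 * (n:ℝ) + 2) - y ^ (2 * n + 2) / (2 * (n:ℝ) + 3) := by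
    funext r
    have hpow : x ^ (2 - 2 * ((r : ℤ) + 2)) = y ^ (2 * r + 2) := by
      have h2 : (2 - 2 * ((r : ℤ) + 2)) = -(2 * r + 2 : ℕ) := by push_cast; ring
      rw [h2, zpow_neg, zpow_natCast, ← inv_pow]
    rw [hpow]
    have h3 : (0:ℝ) < 2 * (r:ℝ) + 3 := by positivity
    have h2 : (0:ℝ) < 2 * (r:ℝ) + 2 := by positivity
    rw [div_sub_div _ _ (ne_of_gt h2) (ne_of_gt h3)]
    rw [show (2 * ((r:ℝ) + 2) - 1) * (2 * ((r:ℝ) + 2) - 2) = (2 * (r:ℝ) + 2) * (2 * (r:ℝ) + 3)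
      from by ring]
    congr 1
    ring
  rw [hEq, hSum.tsum_eq, hL]
  have hlogdiv : Real.log ((1 + y) / (1 - y)) = Real.log (1 + y) - Real.log (1 - y) :=
    Real.log_div (by positivity) (by intro h; nlinarith)
  rw [hlogdiv]
  nlinarith [hxy]
end

section
/- Let r₁, r₂ be nonnegative integers, and let R'(x) = −(r₁ + r₂ − 1)·log x − (r₁/2)·log(1 − x^{−2}) − r₂·log(1 − x^{−1}). Then for all x ≥ 3, −(r₁ + r₂ − 1)·log x ≤ R'(x), and moreover R'(x) ≤ 1.22/x if r₁ + r₂ ≤ 2 while R'(x) ≤ 0 if r₁ + r₂ ≥ 3 — in particular R'(x) ≤ 1.22·δ/x where δ = 1 if r₁ + 2r₂ ≤ 2 and δ = 0 otherwise. -/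
lemma key_log_bound (t : ℝ) (h0 : 0 ≤ t) (h1 : t ≤ 1/3) :
    -Real.log (1 - t) ≤ 1.22 * t := by
  have habs : |t| < 1 := by rw [abs_of_nonneg h0]; linarith
  have h := Real.abs_log_sub_add_sum_range_le habs 6
  rw [abs_of_nonneg h0] at h
  rw [abs_le] at h
  have hsum : (∑ i ∈ Finset.range 6, t ^ (i + 1) / (i + 1))
      = t + t^2/2 + t^3/3 + t^4/4 + t^5/5 + t^6/6 := by
    simp [Finset.sum_range_succ]; ring
  rw [hsum] at h
  have htail : t ^ 7 / (1 - t) ≤ (3/2) * t^7 := by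
    rw [div_le_iff₀ (by linarith)]
    nlinarith [pow_nonneg h0 7]
  nlinarith [h.1, pow_nonneg h0 2, pow_nonneg h0 3, pow_nonneg h0 4,
    pow_nonneg h0 5, pow_nonneg h0 6, pow_nonneg h0 7,
    mul_nonneg (mul_nonneg h0 h0) (sub_nonneg.mpr h1),
    pow_le_pow_left₀ h0 h1 2, pow_le_pow_left₀ h0 h1 3,
    pow_le_pow_left₀ h0 h1 4, pow_le_pow_left₀ h0 h1 5,
    pow_le_pow_left₀ h0 h1 6, pow_le_pow_left₀ h0 h1 7]

/-- Derivative bound of Lemma 2.2: for `r₁` real and `r₂` complex places of a number field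
(so `r₁ + r₂ ≥ 1`) and
`R'(x) = −(r₁+r₂−1)·log x − (r₁/2)·log(1 − x⁻²) − r₂·log(1 − x⁻¹)`,
for all `x ≥ 3` one has `−(r₁+r₂−1)·log x ≤ R'(x)`; moreover `R'(x) ≤ 1.22/x` if
`r₁ + r₂ ≤ 2`, `R'(x) ≤ 0` if `r₁ + r₂ ≥ 3`, and in particular `R'(x) ≤ 1.22·δ/x`
where `δ = 1` if `r₁ + 2r₂ ≤ 2` and `δ = 0` otherwise. -/
theorem Rprime_bounds (r₁ r₂ : ℕ) (hK : 1 ≤ r₁ + r₂) (x : ℝ) (hx : 3 ≤ x)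
    (R : ℝ)
    (hR : R = -((r₁ : ℝ) + (r₂ : ℝ) - 1) * Real.log x
        - (r₁ : ℝ) / 2 * Real.log (1 - (x⁻¹) ^ 2)
        - (r₂ : ℝ) * Real.log (1 - x⁻¹)) :
    -((r₁ : ℝ) + (r₂ : ℝ) - 1) * Real.log x ≤ R ∧
    (r₁ + r₂ ≤ 2 → R ≤ 1.22 / x) ∧
    (3 ≤ r₁ + r₂ → R ≤ 0) ∧
    R ≤ 1.22 * (if r₁ + 2 * r₂ ≤ 2 then (1 : ℝ) else 0) / x := by
  have hx0 : (0:ℝ) < x := by linarith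
  set t := x⁻¹ with ht
  have ht0 : 0 < t := inv_pos.mpr hx0
  have ht3 : t ≤ 1/3 := by
    rw [ht, inv_le_comm₀ hx0 (by norm_num)]
    linarith
  have htx : 1.22 * t = 1.22 / x := by rw [ht, div_eq_mul_inv]
  have ht2 : t ^ 2 ≤ 1/3 := by nlinarith
  have h2 : -Real.log (1 - t) ≤ 1.22 * t := key_log_bound t ht0.le ht3
  have h1 : -Real.log (1 - t ^ 2) ≤ 1.22 * t ^ 2 :=
    key_log_bound _ (by positivity) ht2
  have hl2 : Real.log (1 - t) ≤ 0 := Real.log_nonpos (by linarith) (by linarith)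
  have hl1 : Real.log (1 - t ^ 2) ≤ 0 := by
    apply Real.log_nonpos <;> nlinarith
  have hr1 : (0:ℝ) ≤ (r₁ : ℝ) := Nat.cast_nonneg _
  have hr2 : (0:ℝ) ≤ (r₂ : ℝ) := Nat.cast_nonneg _
  have hlx : 1 ≤ Real.log x := by
    rw [Real.le_log_iff_exp_le hx0]
    have := Real.exp_one_lt_d9
    linarith
  -- lower bound
  have hlow : -((r₁ : ℝ) + (r₂ : ℝ) - 1) * Real.log x ≤ R := by
    rw [hR]
    linarith [mul_nonpos_of_nonneg_of_nonpos hr2 hl2,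
      mul_nonpos_of_nonneg_of_nonpos (show (0:ℝ) ≤ (r₁:ℝ)/2 by positivity) hl1]
  -- upper bound on R
  have hup : R ≤ -((r₁ : ℝ) + (r₂ : ℝ) - 1) * Real.log x
      + (r₁ : ℝ) / 2 * (1.22 * t ^ 2) + (r₂ : ℝ) * (1.22 * t) := by
    rw [hR]
    linarith [mul_le_mul_of_nonneg_left h1 (show (0:ℝ) ≤ (r₁:ℝ)/2 by positivity),
      mul_le_mul_of_nonneg_left h2 hr2]
  -- r₁/2 * t² ≤ r₁ * t
  have hq : (r₁:ℝ)/2 * t^2 ≤ (r₁:ℝ) * t := by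
    nlinarith [mul_nonneg hr1 (mul_nonneg ht0.le (show (0:ℝ) ≤ 2 - t by linarith))]
  -- case s ≥ 2 : R ≤ 0
  have hneg : 2 ≤ r₁ + r₂ → R ≤ 0 := by
    intro hs
    have hs' : (2:ℝ) ≤ (r₁ : ℝ) + (r₂ : ℝ) := by exact_mod_cast hs
    have hlog : ((r₁ : ℝ) + (r₂ : ℝ) - 1) * 1 ≤ ((r₁ : ℝ) + (r₂ : ℝ) - 1) * Real.log x :=
      mul_le_mul_of_nonneg_left hlx (by linarith)
    have hstle : ((r₁:ℝ)+(r₂:ℝ))*t ≤ ((r₁:ℝ)+(r₂:ℝ))*(1/3) :=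
      mul_le_mul_of_nonneg_left ht3 (by positivity)
    linarith [hup, hlog, hq, hstle, hs']
  -- case s = 1 : R ≤ 1.22 / x
  have hone : r₁ + r₂ = 1 → R ≤ 1.22 / x := by
    intro hs
    have hs' : (r₁ : ℝ) + (r₂ : ℝ) = 1 := by exact_mod_cast hs
    have h0 : -((r₁:ℝ) + (r₂:ℝ) - 1) * Real.log x = 0 := by rw [hs']; ring
    have hst : (r₁:ℝ)*t + (r₂:ℝ)*t = t := by
      calc (r₁:ℝ)*t + (r₂:ℝ)*t = ((r₁:ℝ)+(r₂:ℝ))*t := by ring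
        _ = 1*t := by rw [hs']
        _ = t := one_mul t
    rw [← htx]
    linarith [hup, h0, hq, hst]
  have hdivpos : (0:ℝ) ≤ 1.22 / x := by positivity
  refine ⟨hlow, ?_, ?_, ?_⟩
  · intro h
    by_cases h1' : r₁ + r₂ = 1
    · exact hone h1'
    · have : R ≤ 0 := hneg (by omega)
      linarith
  · intro h; exact hneg (by omega)
  · by_cases hc : r₁ + 2 * r₂ ≤ 2
    · rw [if_pos hc, mul_one]
      by_cases h1' : r₁ + r₂ = 1
      · exact hone h1'
      · have : R ≤ 0 := hneg (by omega)
        linarith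
    · rw [if_neg hc, mul_zero, zero_div]
      exact hneg (by omega)
end

section
/- Let ρ = 1/2 + iγ with γ real (a zero on the critical line), x > 1, and h real with |h| < x, h ≠ 0. Define w_ρ = ((1 + h/x)^{ρ+1} − 1 − (ρ+1)·h/x)/(ρ(ρ+1)·(h/x)²). If h > 0 then |w_ρ| ≤ 1/2; if −x < h < 0 then |w_ρ| ≤ 1/2 + |h|/(6x). -/
open Complex MeasureTheory intervalIntegral

lemma deriv_cpow_aux (ν : ℂ) {t : ℝ} (ht : 0 < 1 + t) :
    HasDerivAt (fun t : ℝ => ((1 + t : ℝ) : ℂ) ^ ν) (ν * ((1 + t : ℝ) : ℂ) ^ (ν - 1)) t := by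
  have h : HasDerivAt (fun z : ℂ => (1 + z) ^ ν) (ν * (1 + (t:ℂ)) ^ (ν - 1) * 1) (t : ℂ) :=
    HasDerivAt.cpow_const ((hasDerivAt_id (t:ℂ)).const_add 1)
      (by simpa using Complex.ofReal_mem_slitPlane.2 ht)
  have h2 := h.comp_ofReal
  simp only [mul_one] at h2
  convert h2 using 2 with y
  · push_cast; ring_nf
  · push_cast; ring_nf

lemma cont_cpow_aux (ν : ℂ) {t : ℝ} (ht : 0 < 1 + t) :
    ContinuousAt (fun t : ℝ => ((1 + t : ℝ) : ℂ) ^ ν) t :=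
  (deriv_cpow_aux ν ht).continuousAt

-- second FTC step: ν (1+t)^{ν-1} - ν = ∫ s in 0..t, ν(ν-1)(1+s)^{ν-2}
lemma step2 (ν : ℂ) {t : ℝ} (ht : -1 < t) :
    ν * ((1 + t : ℝ) : ℂ) ^ (ν - 1) - ν
      = ∫ s in (0:ℝ)..t, ν * (ν - 1) * ((1 + s : ℝ) : ℂ) ^ (ν - 2) := by
  have hmem : ∀ s ∈ Set.uIcc (0:ℝ) t, 0 < 1 + s := by
    intro s hs
    rcases Set.mem_uIcc.1 hs with h | h
    · linarith [h.1]
    · linarith [h.1]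
  have hder : ∀ s ∈ Set.uIcc (0:ℝ) t,
      HasDerivAt (fun s : ℝ => ν * ((1 + s : ℝ) : ℂ) ^ (ν - 1))
        (ν * (ν - 1) * ((1 + s : ℝ) : ℂ) ^ (ν - 2)) s := by
    intro s hs
    have := (deriv_cpow_aux (ν - 1) (hmem s hs)).const_mul ν
    refine this.congr_deriv ?_
    ring_nf
  have hint : IntervalIntegrable
      (fun s : ℝ => ν * (ν - 1) * ((1 + s : ℝ) : ℂ) ^ (ν - 2)) volume 0 t := by
    apply ContinuousOn.intervalIntegrable
    intro s hs
    exact ((cont_cpow_aux (ν - 2) (hmem s hs)).const_smul (ν * (ν-1))).continuousWithinAt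
  have := integral_eq_sub_of_hasDerivAt hder hint
  rw [this]
  simp [Complex.one_cpow]

-- first FTC step
lemma step1 (ν : ℂ) {δ : ℝ} (hδ : -1 < δ) :
    ((1 + δ : ℝ) : ℂ) ^ ν - 1 - ν * δ
      = ∫ t in (0:ℝ)..δ, (ν * ((1 + t : ℝ) : ℂ) ^ (ν - 1) - ν) := by
  have hmem : ∀ t ∈ Set.uIcc (0:ℝ) δ, 0 < 1 + t := by
    intro s hs
    rcases Set.mem_uIcc.1 hs with h | h
    · linarith [h.1]
    · linarith [h.1]
  have hder : ∀ t ∈ Set.uIcc (0:ℝ) δ,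
      HasDerivAt (fun t : ℝ => ((1 + t : ℝ) : ℂ) ^ ν - ν * t)
        (ν * ((1 + t : ℝ) : ℂ) ^ (ν - 1) - ν) t := by
    intro t hts
    have h1 := deriv_cpow_aux ν (hmem t hts)
    have h2 : HasDerivAt (fun t : ℝ => ν * (t : ℂ)) ν t := by
      have := ((hasDerivAt_id t).ofReal_comp (z := t)).const_mul ν
      simpa using this
    exact h1.sub h2
  have hint : IntervalIntegrable
      (fun t : ℝ => ν * ((1 + t : ℝ) : ℂ) ^ (ν - 1) - ν) volume 0 δ := by
    apply ContinuousOn.intervalIntegrable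
    intro t hts
    exact (((cont_cpow_aux (ν - 1) (hmem t hts)).const_smul ν).sub
      continuousAt_const).continuousWithinAt
  have := integral_eq_sub_of_hasDerivAt hder hint
  rw [this]
  push_cast
  simp [Complex.one_cpow]
  ring

lemma abs_igr (ν : ℂ) (hν : ν.re = 3/2) {s : ℝ} (hs : 0 < 1 + s) :
    ‖ν * (ν - 1) * ((1 + s : ℝ) : ℂ) ^ (ν - 2)‖
      = ‖ν‖ * ‖ν - 1‖ * (1 + s) ^ (-(1:ℝ)/2) := by
  rw [norm_mul, norm_mul, Complex.norm_cpow_eq_rpow_re_of_pos hs]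
  norm_num [Complex.sub_re, hν]

lemma rpow_neg_half_le_one {s : ℝ} (hs : 0 ≤ s) : (1 + s) ^ (-(1:ℝ)/2) ≤ 1 :=
  Real.rpow_le_one_of_one_le_of_nonpos (by linarith) (by norm_num)

lemma int_rpow_neg_half {t : ℝ} (ht : -1 < t) (ht0 : t ≤ 0) :
    ∫ s in t..(0:ℝ), (1 + s) ^ (-(1:ℝ)/2) = 2 - 2 * (1 + t) ^ ((1:ℝ)/2) := by
  have hmem : ∀ s ∈ Set.uIcc t (0:ℝ), 0 < 1 + s := by
    intro s hs
    rcases Set.mem_uIcc.1 hs with h | h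
    · linarith [h.1]
    · linarith [h.1]
  have hder : ∀ s ∈ Set.uIcc t (0:ℝ),
      HasDerivAt (fun s : ℝ => 2 * (1 + s) ^ ((1:ℝ)/2)) ((1 + s) ^ (-(1:ℝ)/2)) s := by
    intro s hs
    have h1 : HasDerivAt (fun y : ℝ => y ^ ((1:ℝ)/2))
        (((1:ℝ)/2) * (1 + s) ^ ((1:ℝ)/2 - 1)) (1 + s) :=
      Real.hasDerivAt_rpow_const (Or.inl (hmem s hs).ne')
    have h2 := (h1.comp s ((hasDerivAt_id s).const_add 1)).const_mul 2
    refine h2.congr_deriv ?_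
    rw [show (1:ℝ)/2 - 1 = -(1:ℝ)/2 by norm_num]
    ring
  have hint : IntervalIntegrable (fun s : ℝ => (1 + s) ^ (-(1:ℝ)/2)) volume t 0 := by
    apply ContinuousOn.intervalIntegrable
    intro s hs
    exact ((Real.continuousAt_rpow_const _ _ (Or.inl (hmem s hs).ne')).comp
      (by fun_prop)).continuousWithinAt
  rw [integral_eq_sub_of_hasDerivAt hder hint]
  norm_num

lemma int_bound_neg {t : ℝ} (ht : -1 < t) (ht0 : t ≤ 0) :
    ∫ s in t..(0:ℝ), (2 - 2 * (1 + s) ^ ((1:ℝ)/2))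
      = -2 * t - 4/3 + (4/3) * (1 + t) ^ ((3:ℝ)/2) := by
  have hmem : ∀ s ∈ Set.uIcc t (0:ℝ), 0 < 1 + s := by
    intro s hs
    rcases Set.mem_uIcc.1 hs with h | h
    · linarith [h.1]
    · linarith [h.1]
  have hder : ∀ s ∈ Set.uIcc t (0:ℝ),
      HasDerivAt (fun s : ℝ => 2 * s - (4/3) * (1 + s) ^ ((3:ℝ)/2))
        (2 - 2 * (1 + s) ^ ((1:ℝ)/2)) s := by
    intro s hs
    have h1 : HasDerivAt (fun y : ℝ => y ^ ((3:ℝ)/2))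
        (((3:ℝ)/2) * (1 + s) ^ ((3:ℝ)/2 - 1)) (1 + s) :=
      Real.hasDerivAt_rpow_const (Or.inl (hmem s hs).ne')
    have h2 := (h1.comp s ((hasDerivAt_id s).const_add 1)).const_mul (4/3 : ℝ)
    have h3 := ((hasDerivAt_id s).const_mul (2:ℝ)).sub h2
    refine h3.congr_deriv ?_
    rw [show (3:ℝ)/2 - 1 = (1:ℝ)/2 by norm_num]
    ring
  have hint : IntervalIntegrable (fun s : ℝ => 2 - 2 * (1 + s) ^ ((1:ℝ)/2)) volume t 0 := by
    apply ContinuousOn.intervalIntegrable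
    intro s hs
    have hc : ContinuousAt (fun s : ℝ => (1 + s) ^ ((1:ℝ)/2)) s :=
      (Real.continuousAt_rpow_const _ _ (Or.inl (hmem s hs).ne')).comp (by fun_prop)
    exact (continuousAt_const.sub (continuousAt_const.mul hc)).continuousWithinAt
  rw [integral_eq_sub_of_hasDerivAt hder hint]
  norm_num
  ring

lemma inner_pos (ν : ℂ) (hν : ν.re = 3/2) {t : ℝ} (ht : 0 ≤ t) :
    ‖ν * ((1 + t : ℝ) : ℂ) ^ (ν - 1) - ν‖
      ≤ ‖ν‖ * ‖ν - 1‖ * t := by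
  rw [step2 ν (by linarith : (-1:ℝ) < t)]
  have hb : ∀ s ∈ Set.uIoc (0:ℝ) t,
      ‖ν * (ν - 1) * ((1 + s : ℝ) : ℂ) ^ (ν - 2)‖ ≤ ‖ν‖ * ‖ν - 1‖ := by
    intro s hs
    rw [Set.uIoc_of_le ht] at hs
    rw [abs_igr ν hν (by linarith [hs.1])]
    have h1 := rpow_neg_half_le_one hs.1.le
    have h2 : (0:ℝ) ≤ ‖ν‖ * ‖ν - 1‖ :=
      mul_nonneg (norm_nonneg _) (norm_nonneg _)
    nlinarith
  calc ‖∫ s in (0:ℝ)..t, ν * (ν - 1) * ((1 + s : ℝ) : ℂ) ^ (ν - 2)‖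
      ≤ ‖ν‖ * ‖ν - 1‖ * |t - 0| :=
        intervalIntegral.norm_integral_le_of_norm_le_const hb
    _ = ‖ν‖ * ‖ν - 1‖ * t := by rw [sub_zero, _root_.abs_of_nonneg ht]

lemma N_pos (ν : ℂ) (hν : ν.re = 3/2) {δ : ℝ} (hδ : 0 < δ) :
    ‖((1 + δ : ℝ) : ℂ) ^ ν - 1 - ν * δ‖
      ≤ ‖ν‖ * ‖ν - 1‖ * δ ^ 2 / 2 := by
  set C := ‖ν‖ * ‖ν - 1‖ with hC
  rw [step1 ν (by linarith)]
  have hb : ∀ᵐ t ∂(volume.restrict (Set.uIoc (0:ℝ) δ)),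
      ‖ν * ((1 + t : ℝ) : ℂ) ^ (ν - 1) - ν‖ ≤ C * t := by
    filter_upwards [ae_restrict_mem measurableSet_uIoc] with t ht
    rw [Set.uIoc_of_le hδ.le] at ht
    exact inner_pos ν hν ht.1.le
  have hint : IntervalIntegrable (fun t : ℝ => C * t) volume 0 δ :=
    (continuous_const.mul continuous_id).intervalIntegrable _ _
  calc ‖∫ t in (0:ℝ)..δ, (ν * ((1 + t : ℝ) : ℂ) ^ (ν - 1) - ν)‖
      ≤ |∫ t in (0:ℝ)..δ, C * t| := intervalIntegral.norm_integral_le_abs_of_norm_le hb hint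
    _ = C * δ ^ 2 / 2 := by
        rw [intervalIntegral.integral_const_mul, integral_id]
        have hCnn : (0:ℝ) ≤ C := mul_nonneg (norm_nonneg _) (norm_nonneg _)
        rw [_root_.abs_of_nonneg (by nlinarith [sq_nonneg δ])]
        ring

lemma inner_neg (ν : ℂ) (hν : ν.re = 3/2) {t : ℝ} (h1 : -1 < t) (h0 : t ≤ 0) :
    ‖ν * ((1 + t : ℝ) : ℂ) ^ (ν - 1) - ν‖
      ≤ ‖ν‖ * ‖ν - 1‖ * (2 - 2 * (1 + t) ^ ((1:ℝ)/2)) := by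
  set C := ‖ν‖ * ‖ν - 1‖ with hC
  have hCnn : (0:ℝ) ≤ C := mul_nonneg (norm_nonneg _) (norm_nonneg _)
  rw [step2 ν h1]
  rw [intervalIntegral.integral_symm, norm_neg]
  have hb : ∀ᵐ s ∂(volume.restrict (Set.uIoc t (0:ℝ))),
      ‖ν * (ν - 1) * ((1 + s : ℝ) : ℂ) ^ (ν - 2)‖ ≤ C * (1 + s) ^ (-(1:ℝ)/2) := by
    filter_upwards [ae_restrict_mem measurableSet_uIoc] with s hs
    rw [Set.uIoc_of_le h0] at hs
    rw [abs_igr ν hν (by linarith [hs.1])]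
  have hint : IntervalIntegrable (fun s : ℝ => C * (1 + s) ^ (-(1:ℝ)/2)) volume t 0 := by
    apply ContinuousOn.intervalIntegrable
    intro s hs
    have hpos : 0 < 1 + s := by
      rcases Set.mem_uIcc.1 hs with h | h
      · linarith [h.1]
      · linarith [h.1]
    have hc : ContinuousAt (fun s : ℝ => (1 + s) ^ (-(1:ℝ)/2)) s :=
      (Real.continuousAt_rpow_const _ _ (Or.inl hpos.ne')).comp (by fun_prop)
    exact (continuousAt_const.mul hc).continuousWithinAt
  calc ‖∫ s in t..(0:ℝ), ν * (ν - 1) * ((1 + s : ℝ) : ℂ) ^ (ν - 2)‖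
      ≤ |∫ s in t..(0:ℝ), C * (1 + s) ^ (-(1:ℝ)/2)| :=
        intervalIntegral.norm_integral_le_abs_of_norm_le hb hint
    _ = C * (2 - 2 * (1 + t) ^ ((1:ℝ)/2)) := by
        rw [intervalIntegral.integral_const_mul, int_rpow_neg_half h1 h0]
        rw [_root_.abs_of_nonneg]
        have hle : (1 + t) ^ ((1:ℝ)/2) ≤ 1 :=
          Real.rpow_le_one (by linarith) (by linarith) (by norm_num)
        have : 0 ≤ 2 - 2 * (1 + t) ^ ((1:ℝ)/2) := by linarith
        positivity

lemma N_neg (ν : ℂ) (hν : ν.re = 3/2) {δ : ℝ} (h1 : -1 < δ) (h0 : δ < 0) :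
    ‖((1 + δ : ℝ) : ℂ) ^ ν - 1 - ν * δ‖
      ≤ ‖ν‖ * ‖ν - 1‖
        * (-2 * δ - 4/3 + (4/3) * (1 + δ) ^ ((3:ℝ)/2)) := by
  set C := ‖ν‖ * ‖ν - 1‖ with hC
  have hCnn : (0:ℝ) ≤ C := mul_nonneg (norm_nonneg _) (norm_nonneg _)
  rw [step1 ν h1]
  rw [intervalIntegral.integral_symm, norm_neg]
  have hb : ∀ᵐ t ∂(volume.restrict (Set.uIoc δ (0:ℝ))),
      ‖ν * ((1 + t : ℝ) : ℂ) ^ (ν - 1) - ν‖ ≤ C * (2 - 2 * (1 + t) ^ ((1:ℝ)/2)) := by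
    filter_upwards [ae_restrict_mem measurableSet_uIoc] with t ht
    rw [Set.uIoc_of_le h0.le] at ht
    exact inner_neg ν hν (by linarith [ht.1]) ht.2
  have hint : IntervalIntegrable (fun t : ℝ => C * (2 - 2 * (1 + t) ^ ((1:ℝ)/2))) volume δ 0 := by
    apply ContinuousOn.intervalIntegrable
    intro s hs
    have hpos : 0 < 1 + s := by
      rcases Set.mem_uIcc.1 hs with h | h
      · linarith [h.1]
      · linarith [h.1]
    have hc : ContinuousAt (fun s : ℝ => (1 + s) ^ ((1:ℝ)/2)) s :=
      (Real.continuousAt_rpow_const _ _ (Or.inl hpos.ne')).comp (by fun_prop)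
    exact (continuousAt_const.mul (continuousAt_const.sub
      (continuousAt_const.mul hc))).continuousWithinAt
  calc ‖∫ t in δ..(0:ℝ), (ν * ((1 + t : ℝ) : ℂ) ^ (ν - 1) - ν)‖
      ≤ |∫ t in δ..(0:ℝ), C * (2 - 2 * (1 + t) ^ ((1:ℝ)/2))| :=
        intervalIntegral.norm_integral_le_abs_of_norm_le hb hint
    _ = C * (-2 * δ - 4/3 + (4/3) * (1 + δ) ^ ((3:ℝ)/2)) := by
        rw [intervalIntegral.integral_const_mul, int_bound_neg h1 h0.le]
        rw [_root_.abs_of_nonneg]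
        have key : 2/3 - 2*(1+δ) + (4/3) * (1 + δ) ^ ((3:ℝ)/2) ≥ 0 := by
          set s := Real.sqrt (1 + δ) with hs
          have hsnn : 0 ≤ s := Real.sqrt_nonneg _
          have hs2 : s ^ 2 = 1 + δ := Real.sq_sqrt (by linarith)
          have h32 : (1 + δ) ^ ((3:ℝ)/2) = s ^ 3 := by
            rw [← hs2, ← Real.rpow_natCast s 2, ← Real.rpow_mul hsnn,
              ← Real.rpow_natCast s 3]
            norm_num
          rw [h32, ← hs2]
          nlinarith [mul_nonneg (sq_nonneg (1 - s)) hsnn, sq_nonneg (1 - s)]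
        nlinarith

/-- For `ρ = 1/2 + iγ` on the critical line, `x > 1`, `0 < |h| < x`, the quantity
`w_ρ = ((1 + h/x)^{ρ+1} − 1 − (ρ+1)h/x)/(ρ(ρ+1)(h/x)²)` satisfies `|w_ρ| ≤ 1/2` if
`h > 0`, and `|w_ρ| ≤ 1/2 + |h|/(6x)` if `−x < h < 0`. -/
theorem w_rho_bound (γ x h : ℝ) (hx : 1 < x) (hh : |h| < x) (hh0 : h ≠ 0)
    (ρ : ℂ) (hρ : ρ = 1 / 2 + γ * Complex.I)
    (w : ℂ)
    (hw : w = (((1 + h / x : ℝ) : ℂ) ^ (ρ + 1) - 1 - (ρ + 1) * ((h / x : ℝ) : ℂ)) /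
        (ρ * (ρ + 1) * ((h / x : ℝ) : ℂ) ^ 2)) :
    (0 < h → ‖w‖ ≤ 1 / 2) ∧
    (h < 0 → ‖w‖ ≤ 1 / 2 + |h| / (6 * x)) := by
  have hx0 : (0:ℝ) < x := by linarith
  set δ : ℝ := h / x with hδdef
  have hδ0 : δ ≠ 0 := div_ne_zero hh0 hx0.ne'
  have hδabs : |δ| < 1 := by
    rw [hδdef, abs_div, _root_.abs_of_pos hx0, div_lt_one hx0]
    exact hh
  have hδ1 : -1 < δ := by cases' abs_lt.1 hδabs with h1 h2; linarith
  have hδlt : δ < 1 := (abs_lt.1 hδabs).2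
  set ν : ℂ := ρ + 1 with hνdef
  have hν : ν.re = 3/2 := by
    simp [hνdef, hρ, Complex.add_re, Complex.mul_re, Complex.I_re, Complex.I_im]
    norm_num
  have hν1 : ν - 1 = ρ := by rw [hνdef]; ring
  have hρre : ρ.re = 1/2 := by
    simp [hρ, Complex.add_re, Complex.mul_re, Complex.I_re, Complex.I_im]
  have hρ0 : ρ ≠ 0 := fun hc => by rw [hc] at hρre; norm_num at hρre
  have hν0 : ν ≠ 0 := fun hc => by rw [hc] at hν; norm_num at hν
  have hKρ : 0 < ‖ρ‖ := norm_pos_iff.mpr hρ0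
  have hKν : 0 < ‖ν‖ := norm_pos_iff.mpr hν0
  set K : ℝ := ‖ν‖ * ‖ν - 1‖ with hK
  have hKpos : 0 < K := by rw [hK, hν1]; exact mul_pos hKν hKρ
  have habsw : ‖w‖
      = ‖((1 + δ : ℝ) : ℂ) ^ ν - 1 - ν * δ‖ / (K * δ ^ 2) := by
    rw [hw, norm_div, norm_mul, norm_mul, norm_pow, Complex.norm_real, Real.norm_eq_abs, _root_.sq_abs]
    rw [hνdef, hK, hν1, hνdef]
    ring_nf
  have hd2 : 0 < K * δ ^ 2 := mul_pos hKpos (by positivity)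
  constructor
  · intro hpos
    have hδpos : 0 < δ := div_pos hpos hx0
    have hN := N_pos ν hν hδpos
    rw [habsw, div_le_iff₀ hd2]
    calc ‖((1 + δ : ℝ) : ℂ) ^ ν - 1 - ν * δ‖ ≤ K * δ ^ 2 / 2 := hN
      _ = 1 / 2 * (K * δ ^ 2) := by ring
  · intro hneg
    have hδneg : δ < 0 := div_neg_of_neg_of_pos hneg hx0
    have hN := N_neg ν hν hδ1 hδneg
    have hRHS : (1:ℝ) / 2 + |h| / (6 * x) = 1 / 2 - δ / 6 := by
      rw [abs_of_neg hneg, hδdef]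
      field_simp
      ring
    rw [habsw, hRHS, div_le_iff₀ hd2]
    refine hN.trans ?_
    set s : ℝ := Real.sqrt (1 + δ) with hs
    have hsnn : 0 ≤ s := Real.sqrt_nonneg _
    have hs2 : s ^ 2 = 1 + δ := Real.sq_sqrt (by linarith)
    have h32 : (1 + δ) ^ ((3:ℝ)/2) = s ^ 3 := by
      rw [← hs2, ← Real.rpow_natCast s 2, ← Real.rpow_mul hsnn, ← Real.rpow_natCast s 3]
      norm_num
    have hsle : s ≤ 1 := by nlinarith
    rw [h32]
    have hδs : δ = s ^ 2 - 1 := by linarith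
    rw [hδs]
    have hcube : 0 ≤ (1 - s) ^ 3 := pow_nonneg (by linarith) 3
    nlinarith [mul_nonneg (mul_nonneg (sq_nonneg s) hcube) (by linarith : (0:ℝ) ≤ 3 + s),
      mul_nonneg (mul_nonneg (mul_nonneg hKpos.le (sq_nonneg s)) hcube)
        (by linarith : (0:ℝ) ≤ 3 + s)]
end
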